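/- (Uniqueness of the paradoxical part) If S and R are both maximal E⁻¹-closed semikernels of a digraph G (maximal in the sense that no E⁻¹-closed semikernel T satisfies E⁻¹[S] ⊊ E⁻¹[T]), then E⁻¹[S] = E⁻¹[R]. -/
import Mathlib


/-- Out-neighbours of a set `X` under edge relation `E`. -/
def outS {V : Type*} (E : V → V → Prop) (X : Set V) : Set V := {y | ∃ x ∈ X, E x y}

/-- In-neighbours of a set `X` under edge relation `E`. -/
def inS {V : Type*} (E : V → V → Prop) (X : Set V) : Set V := {y | ∃ x ∈ X, E y x}

/-- `K` is a kernel of the digraph `(G,E)`. -/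
def IsKernel {V : Type*} (G : Set V) (E : V → V → Prop) (K : Set V) : Prop :=
  K ⊆ G ∧ inS E K = G \ K

/-- `S` is a semikernel of the digraph `(G,E)`. -/
def IsSemikernel {V : Type*} (G : Set V) (E : V → V → Prop) (S : Set V) : Prop :=
  S ⊆ G ∧ outS E S ⊆ inS E S ∧ inS E S ⊆ G \ S

lemma inS_mono {V : Type*} (E : V → V → Prop) {X Y : Set V} (h : X ⊆ Y) :
    inS E X ⊆ inS E Y := fun _ ⟨x, hx, hEx⟩ => ⟨x, h hx, hEx⟩

lemma stmt12_aux {V : Type*} (G : Set V) (E : V → V → Prop)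
    (hE : ∀ x y, E x y → x ∈ G ∧ y ∈ G) (S R : Set V)
    (hS : IsSemikernel G E S) (hScl : inS E (S ∪ inS E S) ⊆ S ∪ inS E S)
    (hSmax : ∀ T, IsSemikernel G E T → inS E (T ∪ inS E T) ⊆ T ∪ inS E T →
      ¬ (S ∪ inS E S ⊂ T ∪ inS E T))
    (hR : IsSemikernel G E R) (hRcl : inS E (R ∪ inS E R) ⊆ R ∪ inS E R) :
    R ∪ inS E R ⊆ S ∪ inS E S := by
  obtain ⟨hSG, hSout, hSin⟩ := hS
  obtain ⟨hRG, hRout, hRin⟩ := hR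
  -- main claim: R ⊆ S ∪ inS E S
  have hRsub : R ⊆ S ∪ inS E S := by
    by_contra hcon
    obtain ⟨r, hrR, hrcl⟩ : ∃ r ∈ R, r ∉ S ∪ inS E S := by
      simpa [Set.subset_def] using hcon
    set T : Set V := S ∪ (R \ (S ∪ inS E S)) with hTdef
    have hST : S ⊆ T := Set.subset_union_left
    have hinST : inS E S ⊆ inS E T := inS_mono E hST
    have hclST : S ∪ inS E S ⊆ T ∪ inS E T :=
      Set.union_subset_union hST hinST
    -- T is a semikernel
    have hTG : T ⊆ G := by
      rintro x (hx | ⟨hx, -⟩)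
      · exact hSG hx
      · exact hRG hx
    have hTout : outS E T ⊆ inS E T := by
      rintro y ⟨x, (hx | ⟨hxR, hxcl⟩), hExy⟩
      · exact hinST (hSout ⟨x, hx, hExy⟩)
      · by_cases hy : y ∈ inS E S
        · exact hinST hy
        · obtain ⟨z, hzR, hEyz⟩ := hRout ⟨x, hxR, hExy⟩
          by_cases hz : z ∈ S ∪ inS E S
          · rcases hz with hz | hz
            · exact absurd (⟨z, hz, hEyz⟩ : y ∈ inS E S) hy
            · -- z ∈ inS E S, so y ∈ inS (cl S) ⊆ cl S
              have hycl : y ∈ S ∪ inS E S :=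
                hScl ⟨z, Or.inr hz, hEyz⟩
              rcases hycl with hyS | hyin
              · exact absurd (Or.inr (⟨y, hyS, hExy⟩ : x ∈ inS E S)) hxcl
              · exact absurd hyin hy
          · exact ⟨z, Or.inr ⟨hzR, hz⟩, hEyz⟩
    have hTin : inS E T ⊆ G \ T := by
      rintro y ⟨x, hxT, hEyx⟩
      refine ⟨(hE y x hEyx).1, ?_⟩
      rintro (hyS | ⟨hyR, hycl⟩)
      · rcases hxT with hx | ⟨hxR, hxcl⟩
        · exact (hSin ⟨x, hx, hEyx⟩).2 hyS
        · exact hxcl (Or.inr (hSout ⟨y, hyS, hEyx⟩))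
      · rcases hxT with hx | ⟨hxR, hxcl⟩
        · exact hycl (Or.inr ⟨x, hx, hEyx⟩)
        · exact (hRin ⟨x, hxR, hEyx⟩).2 hyR
    have hT : IsSemikernel G E T := ⟨hTG, hTout, hTin⟩
    -- T is E⁻¹-closed
    have hTcl : inS E (T ∪ inS E T) ⊆ T ∪ inS E T := by
      rintro y ⟨x, (hxT | ⟨t, htT, hExt⟩), hEyx⟩
      · exact Or.inr ⟨x, hxT, hEyx⟩
      · rcases htT with ht | ⟨htR, htcl⟩
        · -- t ∈ S : x ∈ inS S, so y ∈ cl S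
          have : y ∈ S ∪ inS E S := hScl ⟨x, Or.inr ⟨t, ht, hExt⟩, hEyx⟩
          exact hclST this
        · -- t ∈ R \ cl S : x ∈ inS R, so y ∈ cl R
          have hy : y ∈ R ∪ inS E R := hRcl ⟨x, Or.inr ⟨t, htR, hExt⟩, hEyx⟩
          rcases hy with hyR | ⟨z, hzR, hEyz⟩
          · by_cases hy' : y ∈ S ∪ inS E S
            · exact hclST hy'
            · exact Or.inl (Or.inr ⟨hyR, hy'⟩)
          · by_cases hz : z ∈ S ∪ inS E S
            · rcases hz with hzS | hzin
              · exact Or.inr (hinST ⟨z, hzS, hEyz⟩)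
              · exact hclST (hScl ⟨z, Or.inr hzin, hEyz⟩)
            · exact Or.inr ⟨z, Or.inr ⟨hzR, hz⟩, hEyz⟩
    -- contradiction with maximality of S
    refine hSmax T hT hTcl ⟨hclST, fun h => ?_⟩
    have : r ∈ S ∪ inS E S := h (Or.inl (Or.inr ⟨hrR, hrcl⟩))
    exact hrcl this
  -- conclude
  refine Set.union_subset hRsub ?_
  exact fun y hy => hScl (inS_mono E hRsub hy)

theorem stmt12 {V : Type*} (G : Set V) (E : V → V → Prop)
    (hE : ∀ x y, E x y → x ∈ G ∧ y ∈ G) (S R : Set V)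
    (hS : IsSemikernel G E S) (hScl : inS E (S ∪ inS E S) ⊆ S ∪ inS E S)
    (hSmax : ∀ T, IsSemikernel G E T → inS E (T ∪ inS E T) ⊆ T ∪ inS E T →
      ¬ (S ∪ inS E S ⊂ T ∪ inS E T))
    (hR : IsSemikernel G E R) (hRcl : inS E (R ∪ inS E R) ⊆ R ∪ inS E R)
    (hRmax : ∀ T, IsSemikernel G E T → inS E (T ∪ inS E T) ⊆ T ∪ inS E T →
      ¬ (R ∪ inS E R ⊂ T ∪ inS E T)) :
    S ∪ inS E S = R ∪ inS E R := by
  exact le_antisymm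
    (stmt12_aux G E hE R S hR hRcl hRmax hS hScl)
    (stmt12_aux G E hE S R hS hScl hSmax hR hRcl)
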